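/- Second-moment matrix of the sign vector: let p ≥ 2, θ₀ ∈ S^{p−1}, and let X be a random vector with a rotationally symmetric distribution about θ₀ on S^{p−1} such that P[X ∈ {θ₀, −θ₀}] = 0. Then E[ S(X) S(X)ᵀ ] = (1/(p−1)) (I_p − θ₀θ₀ᵀ), i.e., for all vectors a, b ∈ ℝ^p, E[ ⟨a, S(X)⟩ ⟨S(X), b⟩ ] = (⟨a,b⟩ − ⟨a,θ₀⟩⟨θ₀,b⟩)/(p−1). -/

import Mathlib

open MeasureTheory ProbabilityTheory Filter
open scoped BigOperators RealInnerProductSpace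

/-- A Borel probability measure on `ℝ^p` is rotationally symmetric about `θ` if it is invariant
under every orthogonal transformation (linear isometry) of `ℝ^p` fixing `θ`. -/
def RotSym {p : ℕ} (θ : EuclideanSpace ℝ (Fin p)) (μ : Measure (EuclideanSpace ℝ (Fin p))) :
    Prop :=
  ∀ O : EuclideanSpace ℝ (Fin p) ≃ₗᵢ[ℝ] EuclideanSpace ℝ (Fin p), O θ = θ →
    Measure.map O μ = μ

section Aux
variable {E : Type*} [NormedAddCommGroup E] [InnerProductSpace ℝ E]

lemma aux_proj_ne {θ x : E} (hθ : ‖θ‖ = 1) (hx : ‖x‖ = 1) (h1 : x ≠ θ) (h2 : x ≠ -θ) :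
    x - ⟪x, θ⟫ • θ ≠ 0 := by
  intro h
  have hxe : x = ⟪x, θ⟫ • θ := by rwa [sub_eq_zero] at h
  have hc : |⟪x, θ⟫| = 1 := by
    have := hx
    rw [hxe, norm_smul, hθ, mul_one] at this
    simpa using this
  rcases abs_eq (by norm_num : (0:ℝ) ≤ 1) |>.1 hc with hc1 | hc1
  · exact h1 (by rw [hxe, hc1, one_smul])
  · exact h2 (by rw [hxe, hc1, neg_one_smul])

lemma aux_orth {θ x : E} (hθ : ‖θ‖ = 1) (hx : x - ⟪x, θ⟫ • θ ≠ 0) :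
    ⟪θ, ‖x - ⟪x, θ⟫ • θ‖⁻¹ • (x - ⟪x, θ⟫ • θ)⟫ = 0 := by
  have h0 : ⟪θ, x - ⟪x, θ⟫ • θ⟫ = 0 := by
    rw [inner_sub_right, real_inner_smul_right, real_inner_self_eq_norm_sq, hθ]
    rw [real_inner_comm]
    ring
  rw [real_inner_smul_right, h0, mul_zero]

lemma aux_norm_one {θ x : E} (hx : x - ⟪x, θ⟫ • θ ≠ 0) :
    ‖(‖x - ⟪x, θ⟫ • θ‖⁻¹ • (x - ⟪x, θ⟫ • θ) : E)‖ = 1 := by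
  rw [norm_smul, norm_inv, norm_norm, inv_mul_cancel₀ (norm_ne_zero_iff.2 hx)]

lemma aux_equivariant {θ : E} (O : E ≃ₗᵢ[ℝ] E) (hO : O θ = θ) {x : E}
    (hx : x - ⟪x, θ⟫ • θ ≠ 0)
    (Sg : E → E)
    (hSg : ∀ y : E, y - ⟪y, θ⟫ • θ ≠ 0 →
      Sg y = ‖y - ⟪y, θ⟫ • θ‖⁻¹ • (y - ⟪y, θ⟫ • θ)) :
    Sg (O x) = O (Sg x) := by
  have hin : ⟪O x, θ⟫ = ⟪x, θ⟫ := by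
    calc ⟪O x, θ⟫ = ⟪O x, O θ⟫ := by rw [hO]
    _ = ⟪x, θ⟫ := O.inner_map_map x θ
  have hproj : O x - ⟪O x, θ⟫ • θ = O (x - ⟪x, θ⟫ • θ) := by
    rw [map_sub, _root_.map_smul, hO, hin]
  have hne : O x - ⟪O x, θ⟫ • θ ≠ 0 := by
    rw [hproj]
    intro h
    apply hx
    have := congrArg O.symm h
    simpa using this
  rw [hSg _ hne, hSg _ hx, hproj, LinearIsometryEquiv.norm_map, _root_.map_smul]
end Aux

/-- Second-moment matrix of the sign vector: if `X` is rotationally symmetric about `θ₀` on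
`S^{p−1}` with `P[X ∈ {θ₀,−θ₀}] = 0`, then `E[S(X)S(X)ᵀ] = (1/(p−1))(I − θ₀θ₀ᵀ)`, i.e. for all
`a, b ∈ ℝ^p`, `E[⟨a,S(X)⟩⟨S(X),b⟩] = (⟨a,b⟩ − ⟨a,θ₀⟩⟨θ₀,b⟩)/(p−1)`. -/

theorem statement_16
    {Ω : Type*} [MeasurableSpace Ω] (P : Measure Ω) [IsProbabilityMeasure P]
    (p : ℕ) (hp : 2 ≤ p)
    (θ : EuclideanSpace ℝ (Fin p)) (hθ : ‖θ‖ = 1)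
    (X : Ω → EuclideanSpace ℝ (Fin p))
    (hXmeas : Measurable X)
    (hXsph : ∀ ω, ‖X ω‖ = 1)
    (hXrot : RotSym θ (Measure.map X P))
    (hXne : P {ω | X ω = θ ∨ X ω = -θ} = 0)
    -- the sign map `Sg`: a fixed measurable choice, equal to the normalized projection of `x`
    -- on the orthogonal complement of `θ` whenever `x ≠ ±θ`
    (Sg : EuclideanSpace ℝ (Fin p) → EuclideanSpace ℝ (Fin p))
    (hSgmeas : Measurable Sg)
    (hSg : ∀ x, x - ⟪x, θ⟫ • θ ≠ 0 →
      Sg x = ‖x - ⟪x, θ⟫ • θ‖⁻¹ • (x - ⟪x, θ⟫ • θ)) :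
    ∀ a b : EuclideanSpace ℝ (Fin p),
      ∫ ω, ⟪a, Sg (X ω)⟫ * ⟪Sg (X ω), b⟫ ∂P =
        (⟪a, b⟫ - ⟪a, θ⟫ * ⟪θ, b⟫) / ((p : ℝ) - 1) := by
  have hzlt : 0 < p := by omega
  have honeset : Orthonormal ℝ
      (Set.restrict ({(⟨0, hzlt⟩ : Fin p)} : Set (Fin p)) (fun _ => θ)) := by
    constructor
    · intro i; exact hθ
    · intro i j hij
      exact absurd (Subtype.ext (i.2.trans j.2.symm)) hij
  obtain ⟨B, hB⟩ := honeset.exists_orthonormalBasis_extension_of_card_eq (by simp)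
  set i0 : Fin p := ⟨0, hzlt⟩ with hi0
  set i1 : Fin p := ⟨1, by omega⟩ with hi1
  have hB0 : B i0 = θ := hB i0 rfl
  have hi01 : i1 ≠ i0 := by simp [hi0, hi1, Fin.ext_iff]
  set μ : Measure (EuclideanSpace ℝ (Fin p)) := Measure.map X P with hμ
  set Y : Ω → EuclideanSpace ℝ (Fin p) := fun ω => Sg (X ω) with hY
  have hYmeas : Measurable Y := hSgmeas.comp hXmeas
  -- a.e. projections nonzero
  have hQP : ∀ᵐ ω ∂P, X ω - ⟪X ω, θ⟫ • θ ≠ 0 := by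
    have h1 : ∀ᵐ ω ∂P, ¬(X ω = θ ∨ X ω = -θ) := by
      rw [ae_iff]; simpa only [not_not] using hXne
    filter_upwards [h1] with ω h
    exact aux_proj_ne hθ (hXsph ω) (fun hh => h (Or.inl hh)) (fun hh => h (Or.inr hh))
  have hQμ : ∀ᵐ x ∂μ, (x : EuclideanSpace ℝ (Fin p)) - ⟪x, θ⟫ • θ ≠ 0 := by
    rw [hμ, ae_map_iff hXmeas.aemeasurable]
    · exact hQP
    · have hc : Continuous fun x : EuclideanSpace ℝ (Fin p) => x - ⟪x, θ⟫ • θ :=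
        continuous_id.sub (by fun_prop)
      exact (hc.measurable (measurableSet_singleton 0)).compl
  have hnorm1 : ∀ᵐ ω ∂P, ‖Y ω‖ = 1 := by
    filter_upwards [hQP] with ω h
    rw [hY]; simp only; rw [hSg _ h]; exact aux_norm_one h
  have horthY : ∀ᵐ ω ∂P, ⟪θ, Y ω⟫ = 0 := by
    filter_upwards [hQP] with ω h
    rw [hY]; simp only; rw [hSg _ h]; exact aux_orth hθ h
  -- invariance
  have key : ∀ (O : EuclideanSpace ℝ (Fin p) ≃ₗᵢ[ℝ] EuclideanSpace ℝ (Fin p)), O θ = θ → ∀ g : EuclideanSpace ℝ (Fin p) → ℝ, Measurable g →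
      ∫ ω, g (Y ω) ∂P = ∫ ω, g (O (Y ω)) ∂P := by
    intro O hO g hg
    have hOmeas : Measurable (O : EuclideanSpace ℝ (Fin p) → EuclideanSpace ℝ (Fin p)) := O.continuous.measurable
    have hgSg : Measurable fun x : EuclideanSpace ℝ (Fin p) => g (Sg x) := hg.comp hSgmeas
    calc ∫ ω, g (Y ω) ∂P = ∫ x, g (Sg x) ∂μ :=
          (integral_map hXmeas.aemeasurable hgSg.aestronglyMeasurable).symm
    _ = ∫ x, g (Sg x) ∂(Measure.map O μ) := by rw [hXrot O hO]
    _ = ∫ x, g (Sg (O x)) ∂μ := integral_map hOmeas.aemeasurable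
          (by rw [hXrot O hO]; exact hgSg.aestronglyMeasurable)
    _ = ∫ x, g (O (Sg x)) ∂μ := by
          refine integral_congr_ae ?_
          filter_upwards [hQμ] with x hx
          rw [aux_equivariant O hO hx Sg hSg]
    _ = ∫ ω, g (O (Y ω)) ∂P :=
          integral_map hXmeas.aemeasurable
            ((hg.comp (hOmeas.comp hSgmeas)).aestronglyMeasurable)
  -- measurability of quadratic test functions
  have hgmeas : ∀ u v : EuclideanSpace ℝ (Fin p), Measurable fun y : EuclideanSpace ℝ (Fin p) => ⟪u, y⟫ * ⟪v, y⟫ := fun u v =>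
    ((continuous_const.inner continuous_id).mul (continuous_const.inner continuous_id)).measurable
  -- integrability
  have hint : ∀ u v : EuclideanSpace ℝ (Fin p), Integrable (fun ω => ⟪u, Y ω⟫ * ⟪v, Y ω⟫) P := by
    intro u v
    refine Integrable.mono' (integrable_const (‖u‖ * ‖v‖))
      ((hgmeas u v).comp hYmeas).aestronglyMeasurable ?_
    filter_upwards [hnorm1] with ω h
    have h1 : |⟪u, Y ω⟫| ≤ ‖u‖ := by
      have := abs_real_inner_le_norm u (Y ω); rwa [h, mul_one] at this
    have h2 : |⟪v, Y ω⟫| ≤ ‖v‖ := by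
      have := abs_real_inner_le_norm v (Y ω); rwa [h, mul_one] at this
    calc ‖⟪u, Y ω⟫ * ⟪v, Y ω⟫‖ = |⟪u, Y ω⟫| * |⟪v, Y ω⟫| := by
          rw [Real.norm_eq_abs, abs_mul]
    _ ≤ ‖u‖ * ‖v‖ := mul_le_mul h1 h2 (abs_nonneg _) (norm_nonneg _)
  -- the second-moment matrix
  set m : Fin p → Fin p → ℝ := fun i j => ∫ ω, ⟪B i, Y ω⟫ * ⟪B j, Y ω⟫ ∂P with hm
  have hswap : ∀ u y : EuclideanSpace ℝ (Fin p), ∀ O : EuclideanSpace ℝ (Fin p) ≃ₗᵢ[ℝ] EuclideanSpace ℝ (Fin p), ⟪u, O y⟫ = ⟪O.symm u, y⟫ := by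
    intro u y O
    rw [real_inner_comm, LinearIsometryEquiv.inner_map_eq_flip, real_inner_comm]
  -- row/column 0 vanish
  have hm0 : ∀ i j : Fin p, (i = i0 ∨ j = i0) → m i j = 0 := by
    intro i j hij
    rw [hm]
    rw [← integral_zero Ω ℝ (μ := P)]
    refine integral_congr_ae ?_
    filter_upwards [horthY] with ω h
    rcases hij with rfl | rfl
    · rw [hB0, h, zero_mul]
    · rw [hB0, h, mul_zero]
  -- off-diagonal vanishes
  have hoff : ∀ i j : Fin p, i ≠ j → m i j = 0 := by
    intro i j hij
    rcases eq_or_ne i i0 with rfl | hi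
    · exact hm0 _ _ (Or.inl rfl)
    set O : EuclideanSpace ℝ (Fin p) ≃ₗᵢ[ℝ] EuclideanSpace ℝ (Fin p) := Submodule.reflection ((ℝ ∙ (B i))ᗮ) with hO
    have hOθ : O θ = θ := by
      rw [← hB0]
      exact Submodule.reflection_mem_subspace_eq_self
        (Submodule.mem_orthogonal_singleton_iff_inner_right.2 (B.orthonormal.2 hi))
    have hOi : O.symm (B i) = -(B i) := by
      rw [hO, Submodule.reflection_symm]
      exact Submodule.reflection_orthogonalComplement_singleton_eq_neg (B i)
    have hOj : O.symm (B j) = B j := by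
      rw [hO, Submodule.reflection_symm]
      exact Submodule.reflection_mem_subspace_eq_self
        (Submodule.mem_orthogonal_singleton_iff_inner_right.2 (B.orthonormal.2 hij))
    have h1 : m i j = ∫ ω, ⟪B i, O (Y ω)⟫ * ⟪B j, O (Y ω)⟫ ∂P :=
      key O hOθ _ (hgmeas (B i) (B j))
    have h2 : ∀ y : EuclideanSpace ℝ (Fin p), ⟪B i, O y⟫ * ⟪B j, O y⟫ = -(⟪B i, y⟫ * ⟪B j, y⟫) := by
      intro y
      rw [hswap, hswap, hOi, hOj, inner_neg_left]
      ring
    rw [hm] at h1 ⊢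
    have h3 : ∫ ω, ⟪B i, O (Y ω)⟫ * ⟪B j, O (Y ω)⟫ ∂P
        = -∫ ω, ⟪B i, Y ω⟫ * ⟪B j, Y ω⟫ ∂P := by
      rw [← integral_neg]
      exact integral_congr_ae (ae_of_all _ fun ω => h2 (Y ω))
    rw [h3] at h1
    linarith
  -- equal diagonal for i ≠ i0
  have hdiag : ∀ i : Fin p, i ≠ i0 → m i i = m i1 i1 := by
    intro i hi
    rcases eq_or_ne i i1 with rfl | hii1
    · rfl
    set O : EuclideanSpace ℝ (Fin p) ≃ₗᵢ[ℝ] EuclideanSpace ℝ (Fin p) := Submodule.reflection ((ℝ ∙ (B i - B i1))ᗮ) with hO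
    have hOθ : O θ = θ := by
      rw [← hB0]
      refine Submodule.reflection_mem_subspace_eq_self
        (Submodule.mem_orthogonal_singleton_iff_inner_right.2 ?_)
      rw [inner_sub_left, B.orthonormal.2 hi, B.orthonormal.2 hi01, sub_zero]
    have hOi : O.symm (B i) = B i1 := by
      rw [hO, Submodule.reflection_symm]
      exact Submodule.reflection_sub (by rw [B.orthonormal.1, B.orthonormal.1])
    have h1 : m i i = ∫ ω, ⟪B i, O (Y ω)⟫ * ⟪B i, O (Y ω)⟫ ∂P :=
      key O hOθ _ (hgmeas (B i) (B i))
    have h2 : ∀ y : EuclideanSpace ℝ (Fin p), ⟪B i, O y⟫ * ⟪B i, O y⟫ = ⟪B i1, y⟫ * ⟪B i1, y⟫ := by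
      intro y; rw [hswap, hOi]
    rw [hm] at h1 ⊢
    rw [h1]
    exact integral_congr_ae (ae_of_all _ fun ω => h2 (Y ω))
  -- sum of diagonal = 1
  have hsum : ∑ i, m i i = 1 := by
    rw [hm]
    rw [← integral_finset_sum Finset.univ (fun i _ => hint (B i) (B i))]
    have : ∀ᵐ ω ∂P, ∑ i, ⟪B i, Y ω⟫ * ⟪B i, Y ω⟫ = 1 := by
      filter_upwards [hnorm1] with ω h
      have : ∑ i, ⟪Y ω, B i⟫ * ⟪B i, Y ω⟫ = ⟪Y ω, Y ω⟫ := B.sum_inner_mul_inner _ _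
      calc ∑ i, ⟪B i, Y ω⟫ * ⟪B i, Y ω⟫ = ∑ i, ⟪Y ω, B i⟫ * ⟪B i, Y ω⟫ := by
            refine Finset.sum_congr rfl fun i _ => ?_
            rw [real_inner_comm (B i) (Y ω)]
      _ = ⟪Y ω, Y ω⟫ := this
      _ = 1 := by rw [real_inner_self_eq_norm_sq, h]; norm_num
    rw [integral_congr_ae this]
    simp
  -- value of the diagonal
  have hp1 : ((p : ℝ) - 1) ≠ 0 := by
    have : (2 : ℝ) ≤ p := by exact_mod_cast hp
    linarith
  have hdiagval : m i1 i1 = 1 / ((p : ℝ) - 1) := by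
    have hsplit : ∑ i ∈ Finset.univ.erase i0, m i i + m i0 i0 = ∑ i, m i i :=
      Finset.sum_erase_add _ _ (Finset.mem_univ i0)
    have hconst : ∑ i ∈ Finset.univ.erase i0, m i i
        = ((p : ℝ) - 1) * m i1 i1 := by
      rw [Finset.sum_congr rfl (fun i hi => hdiag i (Finset.ne_of_mem_erase hi))]
      rw [Finset.sum_const, Finset.card_erase_of_mem (Finset.mem_univ i0)]
      simp only [Finset.card_univ, Fintype.card_fin, nsmul_eq_mul]
      congr 1
      rw [Nat.cast_sub (by omega)]
      norm_num
    rw [hm0 i0 i0 (Or.inl rfl), add_zero, hconst, hsum] at hsplit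
    field_simp at hsplit ⊢
    linarith
  -- final computation
  intro a b
  have hexpand : ∀ y : EuclideanSpace ℝ (Fin p), ⟪a, y⟫ * ⟪y, b⟫
      = ∑ i, ∑ j, (⟪a, B i⟫ * ⟪b, B j⟫) * (⟪B i, y⟫ * ⟪B j, y⟫) := by
    intro y
    have h1 : ⟪a, y⟫ = ∑ i, ⟪a, B i⟫ * ⟪B i, y⟫ := (B.sum_inner_mul_inner a y).symm
    have h2 : ⟪y, b⟫ = ∑ j, ⟪b, B j⟫ * ⟪B j, y⟫ := by
      rw [real_inner_comm]; exact (B.sum_inner_mul_inner b y).symm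
    rw [h1, h2, Finset.sum_mul_sum]
    refine Finset.sum_congr rfl fun i _ => Finset.sum_congr rfl fun j _ => ?_
    ring
  calc ∫ ω, ⟪a, Y ω⟫ * ⟪Y ω, b⟫ ∂P
      = ∫ ω, ∑ i, ∑ j, (⟪a, B i⟫ * ⟪b, B j⟫) * (⟪B i, Y ω⟫ * ⟪B j, Y ω⟫) ∂P :=
        integral_congr_ae (ae_of_all _ fun ω => hexpand (Y ω))
  _ = ∑ i, ∑ j, (⟪a, B i⟫ * ⟪b, B j⟫) * m i j := by
      rw [integral_finset_sum Finset.univ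
        (fun i _ => integrable_finset_sum _ (fun j _ => (hint (B i) (B j)).const_mul _))]
      refine Finset.sum_congr rfl fun i _ => ?_
      rw [integral_finset_sum Finset.univ (fun j _ => (hint (B i) (B j)).const_mul _)]
      exact Finset.sum_congr rfl fun j _ => integral_const_mul _ _
  _ = ∑ i, (⟪a, B i⟫ * ⟪b, B i⟫) * m i i := by
      refine Finset.sum_congr rfl fun i _ => ?_
      rw [Finset.sum_eq_single i]
      · intro j _ hji; rw [hoff i j (Ne.symm hji), mul_zero]
      · intro h; exact absurd (Finset.mem_univ i) h
  _ = (⟪a, b⟫ - ⟪a, θ⟫ * ⟪θ, b⟫) / ((p : ℝ) - 1) := by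
      have hsplit : ∑ i ∈ Finset.univ.erase i0, (⟪a, B i⟫ * ⟪b, B i⟫) * m i i
          + (⟪a, B i0⟫ * ⟪b, B i0⟫) * m i0 i0
          = ∑ i, (⟪a, B i⟫ * ⟪b, B i⟫) * m i i :=
        Finset.sum_erase_add _ _ (Finset.mem_univ i0)
      rw [← hsplit, hm0 i0 i0 (Or.inl rfl), mul_zero, add_zero]
      have : ∀ i ∈ Finset.univ.erase i0,
          (⟪a, B i⟫ * ⟪b, B i⟫) * m i i = (⟪a, B i⟫ * ⟪b, B i⟫) / ((p:ℝ)-1) := by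
        intro i hi
        rw [hdiag i (Finset.ne_of_mem_erase hi), hdiagval]
        ring
      rw [Finset.sum_congr rfl this, ← Finset.sum_div]
      congr 1
      have htot : ∑ i ∈ Finset.univ.erase i0, ⟪a, B i⟫ * ⟪b, B i⟫
          + ⟪a, B i0⟫ * ⟪b, B i0⟫ = ∑ i, ⟪a, B i⟫ * ⟪b, B i⟫ :=
        Finset.sum_erase_add _ _ (Finset.mem_univ i0)
      have hab : ∑ i, ⟪a, B i⟫ * ⟪b, B i⟫ = ⟪a, b⟫ := by
        rw [← B.sum_inner_mul_inner a b]
        exact Finset.sum_congr rfl fun i _ => by rw [real_inner_comm (B i) b]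
      rw [hab, hB0] at htot
      rw [real_inner_comm b θ]
      linarith
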